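/- arXiv:0902.0411 — 2 statements merged into one kernel-verified Lean document; each statement's English description precedes it below -/
import Mathlib

section
/- Let E be a finite nonempty linearly ordered set, I an irreflexive symmetric relation on E, and X^• a finite pointed M(E,I)-set with |X| = n+1, such that the action is full and satisfies the rooted-tree condition. Then for every s ≥ 1 there is an isomorphism of abelian groups H_s(B(X^•)) ≅ (H_s(K(E,I)))^{n+1}. (In the paper's language: lim_s ℤ[x_0,…,x_n] ≅ (lim_s ℤ[x_0])^{n+1}.) -/
/-!
Common setup: free partially commutative monoid `M(E,I)` data, cliques of the
commutation relation, the augmented clique chain complex `K(E,I)`, the chain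
complexes `A(X^•)` and `B(X^•)` of a pointed `M(E,I)`-set, and their homology.

A pointed `M(E,I)`-set with underlying non-base part `X` is modelled as an
action `act : Option X → E → Option X`, where `none` is the base point `*`.
-/

namespace PCMHomology

variable {E : Type*} [LinearOrder E] [Fintype E]

/-- `S` is a clique for the relation `I`: distinct elements pairwise satisfy `I`. -/
def IsClique (I : E → E → Prop) (S : Finset E) : Prop :=
  ∀ a ∈ S, ∀ b ∈ S, a ≠ b → I a b

/-- The type of `s`-cliques: `s`-element subsets of `E` whose elements pairwise
commute (satisfy `I`). -/
def Clique (I : E → E → Prop) (s : ℕ) : Type _ :=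
  {S : Finset E // S.card = s ∧ IsClique I S}

/-- `p_s`, the number of `s`-cliques. -/
noncomputable def pClique (I : E → E → Prop) (s : ℕ) : ℕ :=
  Nat.card (Clique I s)

/-- Removing an element of an `(s+1)`-clique yields an `s`-clique. -/
def faceClique {I : E → E → Prop} {s : ℕ} (S : Clique I (s + 1))
    (e : {a // a ∈ S.val}) : Clique I s :=
  ⟨S.val.erase e.val, by
    refine ⟨?_, ?_⟩
    · rw [Finset.card_erase_of_mem e.property, S.property.1]; rfl
    · intro a ha b hb hab
      exact S.property.2 a (Finset.mem_of_mem_erase ha) b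
        (Finset.mem_of_mem_erase hb) hab⟩

/-- If `e` is the `k`-th element of the clique `S = {e_1 < ⋯ < e_{s+1}}` then
`posIdx S e = k - 1`, the number of elements of `S` smaller than `e`. -/
def posIdx {I : E → E → Prop} {s : ℕ} (S : Clique I (s + 1))
    (e : {a // a ∈ S.val}) : ℕ :=
  (S.val.filter (fun a => a < e.val)).card

/-- Degree-`s` component of the augmented clique chain complex `K(E,I)`:
the free abelian group on the `s`-cliques. -/
abbrev KC (I : E → E → Prop) (s : ℕ) : Type _ := Clique I s →₀ ℤ

/-- The differential of `K(E,I)`: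
`d (e_1,…,e_{s+1}) = ∑ (-1)^(k+1) (e_1,…,ê_k,…,e_{s+1})`. -/
noncomputable def Kd (I : E → E → Prop) (s : ℕ) : KC I (s + 1) →+ KC I s :=
  Finsupp.liftAddHom fun S => zmultiplesHom _
    (∑ e ∈ S.val.attach,
      ((-1 : ℤ) ^ posIdx S e) • Finsupp.single (faceClique S e) (1 : ℤ))

/-- Degree-`s` component of the chain complex `A(X^•)`: the free abelian group
on pairs `(x, S)` with `x ∈ X^•` (including the base point `* = none`) and `S`
an `s`-clique. -/
abbrev AC (I : E → E → Prop) (X : Type*) (s : ℕ) : Type _ :=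
  (Option X × Clique I s) →₀ ℤ

/-- The differential of `A(X^•)`:
`d (x; e_1,…,e_{s+1}) = ∑ (-1)^k ((x·e_k; …ê_k…) - (x; …ê_k…))`. -/
noncomputable def Ad (I : E → E → Prop) {X : Type*}
    (act : Option X → E → Option X) (s : ℕ) : AC I X (s + 1) →+ AC I X s :=
  Finsupp.liftAddHom fun p => zmultiplesHom _
    (∑ e ∈ p.2.val.attach, ((-1 : ℤ) ^ (posIdx p.2 e + 1)) •
      (Finsupp.single (act p.1 e.val, faceClique p.2 e) (1 : ℤ)
        - Finsupp.single (p.1, faceClique p.2 e) (1 : ℤ)))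

/-- Degree-`s` component of the chain complex `B(X^•)`: the free abelian group
on pairs `(x, S)` with `x ∈ X` (so `x ≠ *`) and `S` an `s`-clique. -/
abbrev BC (I : E → E → Prop) (X : Type*) (s : ℕ) : Type _ :=
  (X × Clique I s) →₀ ℤ

/-- The generator `(x·e; T)` of `B(X^•)`, interpreted as `0` when `x·e = *`. -/
noncomputable def bGen {I : E → E → Prop} {X : Type*} {s : ℕ} (o : Option X) (T : Clique I s) :
    BC I X s :=
  o.elim 0 (fun y => Finsupp.single (y, T) (1 : ℤ))

/-- The differential of `B(X^•)`:
`d (x; e_1,…,e_{s+1}) = ∑ (-1)^k ((x·e_k; …ê_k…) - (x; …ê_k…))`, with a term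
`(x·e_k; T)` interpreted as `0` when `x·e_k = *`. -/
noncomputable def Bd (I : E → E → Prop) {X : Type*}
    (act : Option X → E → Option X) (s : ℕ) : BC I X (s + 1) →+ BC I X s :=
  Finsupp.liftAddHom fun p => zmultiplesHom _
    (∑ e ∈ p.2.val.attach, ((-1 : ℤ) ^ (posIdx p.2 e + 1)) •
      (bGen (act (some p.1) e.val) (faceClique p.2 e)
        - Finsupp.single (p.1, faceClique p.2 e) (1 : ℤ)))

/-- Homology at `C1` of `C2 -d2→ C1 -d1→ C0`: the kernel of `d1` modulo (its
intersection with) the image of `d2`. -/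
abbrev homologyOf {C2 C1 C0 : Type*} [AddCommGroup C2] [AddCommGroup C1]
    [AddCommGroup C0] (d1 : C1 →+ C0) (d2 : C2 →+ C1) : Type _ :=
  d1.ker ⧸ ((d2.range).addSubgroupOf d1.ker)

/-- The homology groups of a nonnegatively graded chain complex `(C, d)`;
in degree `0` this is `C 0 / im (d 0)`. -/
def Hmlgy (C : ℕ → Type*) [∀ n, AddCommGroup (C n)]
    (d : ∀ n, C (n + 1) →+ C n) : ℕ → Type _
  | 0 => homologyOf (0 : C 0 →+ PUnit.{1}) (d 0)
  | (s + 1) => homologyOf (d s) (d (s + 1))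

instance hmlgyAddCommGroup (C : ℕ → Type*) [∀ n, AddCommGroup (C n)]
    (d : ∀ n, C (n + 1) →+ C n) : ∀ s, AddCommGroup (Hmlgy C d s)
  | 0 => inferInstanceAs (AddCommGroup (homologyOf (0 : C 0 →+ PUnit.{1}) (d 0)))
  | (s + 1) => inferInstanceAs (AddCommGroup (homologyOf (d s) (d (s + 1))))

end PCMHomology

namespace PCMHomology

section StmtSevenAux

open Finsupp

/-! ### General lemmas about `homologyOf` -/

/-- A compatible triple of additive equivalences induces an isomorphism on homology. -/
noncomputable def homologyCongr {C2 C1 C0 D2 D1 D0 : Type*}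
    [AddCommGroup C2] [AddCommGroup C1] [AddCommGroup C0]
    [AddCommGroup D2] [AddCommGroup D1] [AddCommGroup D0]
    {d1 : C1 →+ C0} {d2 : C2 →+ C1} {d1' : D1 →+ D0} {d2' : D2 →+ D1}
    (e2 : C2 ≃+ D2) (e1 : C1 ≃+ D1) (e0 : C0 ≃+ D0)
    (h1 : ∀ x, d1' (e1 x) = e0 (d1 x)) (h2 : ∀ x, d2' (e2 x) = e1 (d2 x)) :
    homologyOf d1 d2 ≃+ homologyOf d1' d2' := by
  have hker : ∀ x : C1, x ∈ d1.ker → e1 x ∈ d1'.ker := by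
    intro x hx
    rw [AddMonoidHom.mem_ker] at hx ⊢
    rw [h1, hx, map_zero]
  let κ : d1.ker →+ d1'.ker :=
    { toFun := fun x => ⟨e1 x, hker x x.2⟩
      map_zero' := by ext; simp
      map_add' := fun a b => by ext; simp }
  have hκsurj : Function.Surjective κ := by
    intro y
    have hy : d1' (y : D1) = 0 := y.2
    have hx : (e1.symm (y : D1)) ∈ d1.ker := by
      have h := h1 (e1.symm (y : D1))
      rw [e1.apply_symm_apply, hy] at h
      exact AddMonoidHom.mem_ker.2 (e0.injective (by simpa using h.symm))
    exact ⟨⟨e1.symm y, hx⟩, by ext; simp [κ]⟩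
  let φ : d1.ker →+ homologyOf d1' d2' := (QuotientAddGroup.mk' _).comp κ
  have hφsurj : Function.Surjective φ := by
    intro q
    obtain ⟨y, rfl⟩ := QuotientAddGroup.mk'_surjective _ q
    obtain ⟨x, rfl⟩ := hκsurj y
    exact ⟨x, rfl⟩
  have hφker : φ.ker = (d2.range).addSubgroupOf d1.ker := by
    ext x
    simp only [AddMonoidHom.mem_ker, φ, κ, AddMonoidHom.coe_comp, Function.comp_apply,
      QuotientAddGroup.mk'_apply, QuotientAddGroup.eq_zero_iff,
      AddSubgroup.mem_addSubgroupOf, AddMonoidHom.mem_range, AddMonoidHom.coe_mk,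
      ZeroHom.coe_mk]
    constructor
    · rintro ⟨z, hz⟩
      refine ⟨e2.symm z, e1.injective ?_⟩
      rw [← h2, e2.apply_symm_apply]
      exact hz
    · rintro ⟨z, hz⟩
      exact ⟨e2 z, by rw [h2, hz]⟩
  exact (QuotientAddGroup.quotientAddEquivOfEq hφker.symm).trans
    (QuotientAddGroup.quotientKerEquivOfSurjective φ hφsurj)

/-- Homology commutes with finite products (in the form of `AddMonoidHom.compLeft`). -/
noncomputable def homologyPi {ι : Type*} {C2 C1 C0 : Type*}
    [AddCommGroup C2] [AddCommGroup C1] [AddCommGroup C0]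
    (d1 : C1 →+ C0) (d2 : C2 →+ C1) :
    homologyOf (d1.compLeft ι) (d2.compLeft ι) ≃+ (ι → homologyOf d1 d2) := by
  classical
  have hmem : ∀ (f : (d1.compLeft ι).ker) (i : ι), (f : ι → C1) i ∈ d1.ker := by
    intro f i
    have hf : d1.compLeft ι (f : ι → C1) = 0 := f.2
    have := congrFun hf i
    simpa [AddMonoidHom.compLeft_apply] using this
  let φ : (d1.compLeft ι).ker →+ (ι → homologyOf d1 d2) :=
    AddMonoidHom.mk' (fun f i => QuotientAddGroup.mk ⟨(f : ι → C1) i, hmem f i⟩)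
      (fun a b => rfl)
  have hφsurj : Function.Surjective φ := by
    intro q
    have hrep : ∀ i, ∃ y : d1.ker, QuotientAddGroup.mk y = q i := fun i =>
      Quotient.exists_rep (q i)
    choose y hy using hrep
    have hker : (fun i => ((y i : C1))) ∈ (d1.compLeft ι).ker := by
      rw [AddMonoidHom.mem_ker]
      funext i
      exact (y i).2
    refine ⟨⟨fun i => (y i : C1), hker⟩, ?_⟩
    funext i
    exact hy i
  have hφker : φ.ker = ((d2.compLeft ι).range).addSubgroupOf (d1.compLeft ι).ker := by
    ext f
    rw [AddMonoidHom.mem_ker, AddSubgroup.mem_addSubgroupOf, AddMonoidHom.mem_range]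
    constructor
    · intro h
      have h' : ∀ i, ∃ z : C2, d2 z = (f : ι → C1) i := by
        intro i
        have h2 : QuotientAddGroup.mk (⟨(f : ι → C1) i, hmem f i⟩ : d1.ker)
            = (0 : homologyOf d1 d2) := congrFun h i
        rw [QuotientAddGroup.eq_zero_iff, AddSubgroup.mem_addSubgroupOf,
          AddMonoidHom.mem_range] at h2
        exact h2
      choose z hz using h'
      exact ⟨z, by funext i; exact hz i⟩
    · rintro ⟨z, hz⟩
      funext i
      show QuotientAddGroup.mk (⟨(f : ι → C1) i, hmem f i⟩ : d1.ker)
          = (0 : homologyOf d1 d2)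
      rw [QuotientAddGroup.eq_zero_iff, AddSubgroup.mem_addSubgroupOf,
        AddMonoidHom.mem_range]
      exact ⟨z i, congrFun hz i⟩
  exact (QuotientAddGroup.quotientAddEquivOfEq hφker.symm).trans
    (QuotientAddGroup.quotientKerEquivOfSurjective φ hφsurj)

/-! ### Auxiliary additive equivalences -/

/-- Multiplication by `(-1)^s` as an additive equivalence. -/
def sgnEquiv (M : Type*) [AddCommGroup M] (s : ℕ) : M ≃+ M where
  toFun v := (-1 : ℤ) ^ s • v
  invFun v := (-1 : ℤ) ^ s • v
  left_inv v := by
    show (-1 : ℤ) ^ s • (-1 : ℤ) ^ s • v = v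
    rw [smul_smul, ← pow_add, ← two_mul, pow_mul, neg_one_sq, one_pow, one_smul]
  right_inv v := by
    show (-1 : ℤ) ^ s • (-1 : ℤ) ^ s • v = v
    rw [smul_smul, ← pow_add, ← two_mul, pow_mul, neg_one_sq, one_pow, one_smul]
  map_add' := smul_add _

/-- A unit of the endomorphism ring gives an additive self-equivalence. -/
noncomputable def unitEndEquiv {M : Type*} [AddCommGroup M] (u : (AddMonoid.End M)ˣ) :
    M ≃+ M where
  toFun := (u : AddMonoid.End M)
  invFun := (↑u⁻¹ : AddMonoid.End M)
  left_inv v := by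
    have h1 : ((↑u⁻¹ * ↑u : AddMonoid.End M)) v = v := by rw [u.inv_mul]; rfl
    exact h1
  right_inv v := by
    have h1 : ((↑u * ↑u⁻¹ : AddMonoid.End M)) v = v := by rw [u.mul_inv]; rfl
    exact h1
  map_add' := map_add _

/-- Reindexing a product along an equivalence of the index type. -/
def piReindex {K : Type*} [AddCommGroup K] {α β : Type*} (e : α ≃ β) :
    (α → K) ≃+ (β → K) :=
  { Equiv.arrowCongr e (Equiv.refl K) with map_add' := fun _ _ => rfl }

theorem endSubApply {M : Type*} [AddCommGroup M] (f g : AddMonoid.End M) (x : M) :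
    (f - g) x = f x - g x := rfl

theorem endZsmul {M : Type*} [AddCommGroup M] (f : AddMonoid.End M) (n : ℤ) (x : M) :
    f (n • x) = n • f x := map_zsmul f n x

end StmtSevenAux

section StmtSevenMain

open Finsupp

variable {E : Type*} [LinearOrder E] [Fintype E]
variable (I : E → E → Prop) {X : Type*}

/-- The translation endomorphism `T : (x; S) ↦ (x·e₀; S)` of `BC`. -/
noncomputable def Tmap (act : Option X → E → Option X) (e0 : E) (s : ℕ) :
    AddMonoid.End (BC I X s) :=
  Finsupp.liftAddHom fun p => zmultiplesHom _ (bGen (act (some p.1) e0) p.2)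

/-- The "untwisted" differential `D (x;S) = ∑ (-1)^(pos+1) (x; face)`. -/
noncomputable def Dd (s : ℕ) : BC I X (s + 1) →+ BC I X s :=
  Finsupp.liftAddHom fun p => zmultiplesHom _
    (∑ e ∈ p.2.val.attach, ((-1 : ℤ) ^ (posIdx p.2 e + 1)) •
      Finsupp.single (p.1, faceClique p.2 e) (1 : ℤ))

theorem Tmap_single (act : Option X → E → Option X) (e0 : E) (s : ℕ)
    (p : X × Clique I s) (c : ℤ) :
    Tmap I act e0 s (Finsupp.single p c) = c • bGen (act (some p.1) e0) p.2 := by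
  exact (Finsupp.liftAddHom_apply_single _ _ _).trans
    (zmultiplesHom_apply _ (bGen (act (some p.1) e0) p.2) c)

theorem Dd_single (s : ℕ) (p : X × Clique I (s + 1)) (c : ℤ) :
    Dd I s (Finsupp.single p c) =
      c • ∑ e ∈ p.2.val.attach, ((-1 : ℤ) ^ (posIdx p.2 e + 1)) •
        Finsupp.single (p.1, faceClique p.2 e) (1 : ℤ) := by
  simp [Dd, Finsupp.liftAddHom_apply_single, zmultiplesHom_apply]

theorem Kd_single (s : ℕ) (S : Clique I (s + 1)) (c : ℤ) :
    Kd I s (Finsupp.single S c) =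
      c • ∑ e ∈ S.val.attach, ((-1 : ℤ) ^ posIdx S e) •
        Finsupp.single (faceClique S e) (1 : ℤ) := by
  simp [Kd, Finsupp.liftAddHom_apply_single, zmultiplesHom_apply]

theorem Bd_single (act : Option X → E → Option X) (s : ℕ)
    (p : X × Clique I (s + 1)) (c : ℤ) :
    Bd I act s (Finsupp.single p c) =
      c • ∑ e ∈ p.2.val.attach, ((-1 : ℤ) ^ (posIdx p.2 e + 1)) •
        (bGen (act (some p.1) e.val) (faceClique p.2 e)
          - Finsupp.single (p.1, faceClique p.2 e) (1 : ℤ)) := by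
  simp [Bd, Finsupp.liftAddHom_apply_single, zmultiplesHom_apply]

theorem Tmap_bGen (act : Option X → E → Option X) (e0 : E)
    (hstar : ∀ e, act none e = none) (s : ℕ) (o : Option X) (T : Clique I s) :
    Tmap I act e0 s (bGen o T) = bGen (act o e0) T := by
  cases o with
  | none => simp [bGen, hstar]
  | some y => simp [bGen, Tmap_single]

theorem Tmap_pow_bGen (act : Option X → E → Option X) (e0 : E)
    (hstar : ∀ e, act none e = none) (s : ℕ) (m : ℕ) (o : Option X) (T : Clique I s) :
    ((Tmap I act e0 s) ^ m) (bGen o T) = bGen ((fun o => act o e0)^[m] o) T := by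
  induction m generalizing o with
  | zero => simp
  | succ m ih =>
    rw [pow_succ, AddMonoid.End.coe_mul, Function.comp_apply,
      Tmap_bGen I act e0 hstar, ih, ← Function.iterate_succ_apply]

/-- Uniform nilpotency exponent from the rooted tree condition. -/
theorem Tmap_nilpotent [Fintype X] (act : Option X → E → Option X) (e0 : E)
    (hstar : ∀ e, act none e = none)
    (htree : ∀ x : X, ∃ k : ℕ, (fun o => act o e0)^[k] (some x) = none) (s : ℕ) :
    IsNilpotent (Tmap I act e0 s) := by
  classical
  set f : Option X → Option X := fun o => act o e0 with hf
  have hfnone : ∀ m, f^[m] none = none :=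
    fun m => Function.iterate_fixed (by simp [hf, hstar]) m
  have hN : ∃ N : ℕ, ∀ x : X, f^[N] (some x) = none := by
    choose k hk using htree
    refine ⟨Finset.univ.sup k, fun x => ?_⟩
    have hle : k x ≤ Finset.univ.sup k := Finset.le_sup (Finset.mem_univ x)
    have : f^[Finset.univ.sup k] (some x)
        = f^[Finset.univ.sup k - k x] (f^[k x] (some x)) := by
      rw [← Function.iterate_add_apply, Nat.sub_add_cancel hle]
    rw [this, hk x, hfnone]
  obtain ⟨N, hNs⟩ := hN
  refine ⟨N, ?_⟩
  apply Finsupp.addHom_ext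
  intro p c
  obtain ⟨x, S⟩ := p
  show (Tmap I act e0 s ^ N : AddMonoid.End (BC I X s)) (Finsupp.single (x, S) c)
    = (0 : AddMonoid.End (BC I X s)) (Finsupp.single (x, S) c)
  have h1 : Finsupp.single ((x, S) : X × Clique I s) c = c • bGen (some x) S := by
    simp [bGen]
  rw [h1, endZsmul, endZsmul,
    Tmap_pow_bGen I act e0 hstar s N (some x) S, hNs x]
  simp [bGen]

theorem Bd_eq_Dd (act : Option X → E → Option X) (e0 : E)
    (hfull : ∀ o e e', act o e = act o e') (s : ℕ) (v : BC I X (s + 1)) :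
    Bd I act s v = Tmap I act e0 s (Dd I s v) - Dd I s v := by
  induction v using Finsupp.induction_linear with
  | zero => simp
  | add a b ha hb =>
    rw [map_add, map_add, map_add, ha, hb]; abel
  | single p c =>
    rw [Bd_single, Dd_single, endZsmul, ← smul_sub]
    congr 1
    rw [map_sum, ← Finset.sum_sub_distrib]
    refine Finset.sum_congr rfl fun e _ => ?_
    rw [endZsmul, Tmap_single, one_smul, ← smul_sub,
      hfull (some p.1) e.val e0]

theorem Dd_Tmap_comm (act : Option X → E → Option X) (e0 : E) (s : ℕ)
    (v : BC I X (s + 1)) :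
    Dd I s (Tmap I act e0 (s + 1) v) = Tmap I act e0 s (Dd I s v) := by
  induction v using Finsupp.induction_linear with
  | zero => simp
  | add a b ha hb => simp only [map_add, ha, hb]
  | single p c =>
    obtain ⟨x, S⟩ := p
    rw [Tmap_single, Dd_single, AddMonoidHom.map_zsmul, endZsmul,
      map_sum]
    congr 1
    cases h : act (some x) e0 with
    | none =>
      simp only [h, bGen, Option.elim, map_zero]
      refine (Finset.sum_eq_zero fun e _ => ?_).symm
      rw [endZsmul, Tmap_single, h]
      simp [bGen]
    | some y =>
      simp only [h]
      have hb : bGen (some y) S = Finsupp.single ((y, S) : X × Clique I (s + 1)) 1 := rfl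
      rw [hb, Dd_single, one_smul]
      refine Finset.sum_congr rfl fun e _ => ?_
      rw [endZsmul, Tmap_single, h]
      simp [bGen]

theorem Dd_phi_pow_comm (act : Option X → E → Option X) (e0 : E) (s : ℕ) (m : ℕ)
    (v : BC I X (s + 1)) :
    Dd I s (((Tmap I act e0 (s + 1) - 1) ^ m) v)
      = ((Tmap I act e0 s - 1) ^ m) (Dd I s v) := by
  induction m generalizing v with
  | zero => simp
  | succ m ih =>
    rw [pow_succ, pow_succ, AddMonoid.End.coe_mul, AddMonoid.End.coe_mul,
      Function.comp_apply, Function.comp_apply, ih]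
    congr 1
    rw [endSubApply, endSubApply, map_sub,
      Dd_Tmap_comm]
    rfl

theorem compLeft_pi_single {ι M N : Type*} [DecidableEq ι] [AddCommMonoid M]
    [AddCommMonoid N] (f : M →+ N) (i : ι) (m : M) :
    f.compLeft ι (Pi.single i m) = Pi.single i (f m) := by
  funext j
  simp only [AddMonoidHom.compLeft_apply, Function.comp_apply]
  by_cases h : j = i
  · subst h; rw [Pi.single_eq_same, Pi.single_eq_same]
  · rw [Pi.single_eq_of_ne h, Pi.single_eq_of_ne h, map_zero]

/-- The composite reindexing equivalence `BC I X s ≃+ (Fin (n+1) → KC I s)`. -/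
noncomputable def Jfull [Fintype X] {n : ℕ} (eX : X ≃ Fin (n + 1)) (s : ℕ) :
    BC I X s ≃+ (Fin (n + 1) → KC I s) :=
  ((Finsupp.finsuppProdLEquiv ℤ).toAddEquiv.trans
    Finsupp.addEquivFunOnFinite).trans (piReindex eX)

theorem Jfull_apply [Fintype X] {n : ℕ} (eX : X ≃ Fin (n + 1)) (s : ℕ)
    (v : BC I X s) (i : Fin (n + 1)) (T : Clique I s) :
    Jfull I eX s v i T = v (eX.symm i, T) := by
  show (Finsupp.finsuppProdLEquiv ℤ v) (eX.symm i) T = v (eX.symm i, T)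
  exact Finsupp.curry_apply v (eX.symm i) T

theorem Jfull_single [Fintype X] {n : ℕ} (eX : X ≃ Fin (n + 1)) (s : ℕ)
    (p : X × Clique I s) (c : ℤ) :
    Jfull I eX s (Finsupp.single p c) = Pi.single (eX p.1) (Finsupp.single p.2 c) := by
  classical
  obtain ⟨x, S⟩ := p
  funext i
  ext T
  rw [Jfull_apply]
  by_cases h : i = eX x
  · subst h
    rw [Equiv.symm_apply_apply, Pi.single_eq_same]
    simp [Finsupp.single_apply, Prod.mk.injEq]
  · have hx : eX.symm i ≠ x := fun hh => h (by rw [← hh, Equiv.apply_symm_apply])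
    rw [Pi.single_eq_of_ne h]
    have hne : ((x, S) : X × Clique I s) ≠ (eX.symm i, T) := by
      intro hh
      exact hx (congrArg Prod.fst hh).symm
    rw [Finsupp.single_apply, if_neg hne]
    rfl

theorem Jfull_Dd [Fintype X] {n : ℕ} (eX : X ≃ Fin (n + 1)) (s : ℕ)
    (v : BC I X (s + 1)) :
    (Kd I s).compLeft (Fin (n + 1)) (Jfull I eX (s + 1) v)
      = - Jfull I eX s (Dd I s v) := by
  induction v using Finsupp.induction_linear with
  | zero => simp
  | add a b ha hb => simp only [map_add, ha, hb, neg_add]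
  | single p c =>
    classical
    obtain ⟨x, S⟩ := p
    rw [Jfull_single, compLeft_pi_single, Kd_single, Dd_single, map_zsmul, map_sum]
    funext j
    by_cases h : j = eX x
    · subst h
      rw [Pi.single_eq_same]
      simp only [Pi.neg_apply, Pi.smul_apply, Finset.sum_apply]
      have : ∀ e ∈ S.val.attach,
          (Jfull I eX s ((-1 : ℤ) ^ (posIdx S e + 1) •
            Finsupp.single ((x, faceClique S e) : X × Clique I s) (1 : ℤ))) (eX x)
          = (-1 : ℤ) ^ (posIdx S e + 1) • Finsupp.single (faceClique S e) (1 : ℤ) := by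
        intro e _
        rw [map_zsmul, Jfull_single]
        simp [Pi.single_eq_same]
      rw [Finset.sum_congr rfl this]
      simp only [pow_succ, mul_neg_one, neg_smul, Finset.sum_neg_distrib,
        smul_neg, neg_neg]
    · rw [Pi.single_eq_of_ne h]
      simp only [Pi.neg_apply, Pi.smul_apply, Finset.sum_apply]
      have : ∀ e ∈ S.val.attach,
          (Jfull I eX s ((-1 : ℤ) ^ (posIdx S e + 1) •
            Finsupp.single ((x, faceClique S e) : X × Clique I s) (1 : ℤ))) j
          = 0 := by
        intro e _
        rw [map_zsmul, Jfull_single]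
        simp [Pi.single_eq_of_ne h]
      rw [Finset.sum_congr rfl this]
      simp

theorem isUnit_phi [Fintype X] (act : Option X → E → Option X) (e0 : E)
    (hstar : ∀ e, act none e = none)
    (htree : ∀ x : X, ∃ k : ℕ, (fun o => act o e0)^[k] (some x) = none)
    (s m : ℕ) : IsUnit ((Tmap I act e0 s - 1) ^ m) :=
  ((Tmap_nilpotent I act e0 hstar htree s).isUnit_sub_one).pow m

/-- The chain equivalence `ε_s = J ∘ (-1)^s ∘ (T-1)^s`. -/
noncomputable def epsEquiv [Fintype X] {n : ℕ} (eX : X ≃ Fin (n + 1))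
    (act : Option X → E → Option X) (e0 : E)
    (hstar : ∀ e, act none e = none)
    (htree : ∀ x : X, ∃ k : ℕ, (fun o => act o e0)^[k] (some x) = none)
    (s : ℕ) : BC I X s ≃+ (Fin (n + 1) → KC I s) :=
  (unitEndEquiv (isUnit_phi I act e0 hstar htree s s).unit).trans
    ((sgnEquiv _ s).trans (Jfull I eX s))

theorem epsEquiv_apply [Fintype X] {n : ℕ} (eX : X ≃ Fin (n + 1))
    (act : Option X → E → Option X) (e0 : E)
    (hstar : ∀ e, act none e = none)
    (htree : ∀ x : X, ∃ k : ℕ, (fun o => act o e0)^[k] (some x) = none)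
    (s : ℕ) (v : BC I X s) :
    epsEquiv I eX act e0 hstar htree s v
      = Jfull I eX s ((-1 : ℤ) ^ s • ((Tmap I act e0 s - 1) ^ s) v) := by
  show Jfull I eX s ((-1 : ℤ) ^ s •
    (((isUnit_phi I act e0 hstar htree s s).unit : AddMonoid.End (BC I X s)) v)) = _
  rw [IsUnit.unit_spec]

theorem eps_chain [Fintype X] {n : ℕ} (eX : X ≃ Fin (n + 1))
    (act : Option X → E → Option X) (e0 : E)
    (hstar : ∀ e, act none e = none)
    (hfull : ∀ o e e', act o e = act o e')
    (htree : ∀ x : X, ∃ k : ℕ, (fun o => act o e0)^[k] (some x) = none)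
    (u : ℕ) (v : BC I X (u + 1)) :
    (Kd I u).compLeft (Fin (n + 1)) (epsEquiv I eX act e0 hstar htree (u + 1) v)
      = epsEquiv I eX act e0 hstar htree u (Bd I act u v) := by
  rw [epsEquiv_apply, epsEquiv_apply]
  rw [map_zsmul (Jfull I eX (u + 1) : BC I X (u + 1) ≃+ _),
    map_zsmul ((Kd I u).compLeft (Fin (n + 1))), Jfull_Dd]
  have hDd : Dd I u (((Tmap I act e0 (u + 1) - 1) ^ (u + 1)) v)
      = ((Tmap I act e0 u - 1) ^ u) (Bd I act u v) := by
    rw [Dd_phi_pow_comm, pow_succ, AddMonoid.End.coe_mul, Function.comp_apply]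
    congr 1
    rw [endSubApply, Bd_eq_Dd I act e0 hfull]
    rfl
  rw [hDd, map_zsmul]
  rw [smul_neg, ← neg_smul, pow_succ, mul_neg_one, neg_neg]

end StmtSevenMain

/-- Let `X^•` be a finite pointed `M(E,I)`-set with
`|X| = n + 1`, with full action satisfying the rooted-tree condition. Then for
every `s ≥ 1`, `H_s(B(X^•)) ≅ (H_s(K(E,I)))^{n+1}`. -/
theorem stmt7 {E : Type*} [LinearOrder E] [Fintype E] [Nonempty E]
    (I : E → E → Prop) (hirr : ∀ e, ¬ I e e) (hsym : ∀ e e', I e e' → I e' e)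
    (X : Type*) [Fintype X] (n : ℕ) (hcard : Fintype.card X = n + 1)
    (act : Option X → E → Option X)
    (hstar : ∀ e, act none e = none)
    (hcomm : ∀ o e e', I e e' → act (act o e) e' = act (act o e') e)
    (hfull : ∀ o e e', act o e = act o e')
    (e0 : E)
    (htree : ∀ x : X, ∃ k : ℕ, (fun o => act o e0)^[k] (some x) = none) :
    ∀ s : ℕ, 1 ≤ s → Nonempty
      (Hmlgy (BC I X) (Bd I act) s ≃+
        (Fin (n + 1) → Hmlgy (KC I) (Kd I) s)) := by
  classical
  intro s hs
  obtain ⟨t, rfl⟩ : ∃ t, s = t + 1 := ⟨s - 1, (Nat.succ_pred_eq_of_pos hs).symm⟩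
  obtain ⟨eX⟩ : Nonempty (X ≃ Fin (n + 1)) := ⟨Fintype.equivFinOfCardEq hcard⟩
  refine ⟨?_⟩
  show homologyOf (Bd I act t) (Bd I act (t + 1)) ≃+
      (Fin (n + 1) → homologyOf (Kd I t) (Kd I (t + 1)))
  exact (homologyCongr
      (epsEquiv I eX act e0 hstar htree (t + 2))
      (epsEquiv I eX act e0 hstar htree (t + 1))
      (epsEquiv I eX act e0 hstar htree t)
      (eps_chain I eX act e0 hstar hfull htree t)
      (eps_chain I eX act e0 hstar hfull htree (t + 1))).trans
    (homologyPi (Kd I t) (Kd I (t + 1)))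

end PCMHomology
end

section
/- Let E be a finite nonempty linearly ordered set, I an irreflexive symmetric relation on E, and X^• a finite pointed M(E,I)-set such that the action is full and satisfies the rooted-tree condition. Then the integer one-dimensional homology group H_1(A(X^•)) is a torsion-free abelian group. -/
namespace PCMHomology

variable {E : Type*} [LinearOrder E] [Fintype E]

section Aux

set_option linter.unusedSectionVars false

variable (I : E → E → Prop)

/-- The singleton clique. -/
def sgl (e : E) : Clique I 1 :=
  ⟨{e}, by simp, by
    intro a ha b hb hne
    rw [Finset.mem_singleton] at ha hb
    subst ha; subst hb; exact absurd rfl hne⟩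

/-- The unique element of a 1-clique. -/
def elt (S : Clique I 1) : E :=
  S.val.min' (Finset.card_pos.mp (by rw [S.2.1]; norm_num))

lemma elt_mem (S : Clique I 1) : elt I S ∈ S.val := Finset.min'_mem _ _

lemma val_eq_sgl (S : Clique I 1) : S.val = {elt I S} := by
  obtain ⟨a, ha⟩ := Finset.card_eq_one.mp S.2.1
  have h := elt_mem I S
  rw [ha, Finset.mem_singleton] at h
  rw [ha, h]

lemma sgl_elt (S : Clique I 1) : sgl I (elt I S) = S :=
  Subtype.ext (val_eq_sgl I S).symm

lemma elt_sgl (e : E) : elt I (sgl I e) = e := by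
  have := elt_mem I (sgl I e)
  simpa [sgl] using this

/-- The 2-clique `{a, b}` for `a < b` with `I a b` and `I b a`. -/
def pairClique (a b : E) (hab : a < b) (h1 : I a b) (h2 : I b a) : Clique I 2 :=
  ⟨{a, b}, Finset.card_pair hab.ne, by
    intro x hx y hy hxy
    simp only [Finset.mem_insert, Finset.mem_singleton] at hx hy
    rcases hx with rfl | rfl <;> rcases hy with rfl | rfl <;>
      first | exact absurd rfl hxy | assumption⟩

lemma attach_sum_pair {M : Type*} [AddCommMonoid M] {s : Finset E} {a b : E}
    (hab : a ≠ b) (hs : s = {a, b}) (G : {x // x ∈ s} → M)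
    (ha : a ∈ s) (hb : b ∈ s) :
    ∑ e ∈ s.attach, G e = G ⟨a, ha⟩ + G ⟨b, hb⟩ := by
  classical
  have key : ∀ e : {x // x ∈ s},
      G e = (fun x => if h : x ∈ s then G ⟨x, h⟩ else 0) e.val := by
    intro e; simp [e.2]
  have h2 : ∑ x ∈ s, (if h : x ∈ s then G ⟨x, h⟩ else 0) = G ⟨a, ha⟩ + G ⟨b, hb⟩ := by
    subst hs
    rw [Finset.sum_pair hab, dif_pos ha, dif_pos hb]
  rw [← h2, ← Finset.sum_attach s (fun x => if h : x ∈ s then G ⟨x, h⟩ else 0)]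
  exact Finset.sum_congr rfl (fun e _ => key e)

variable {X : Type*}

lemma Ad_single (act : Option X → E → Option X) (s : ℕ)
    (p : Option X × Clique I (s + 1)) (n : ℤ) :
    Ad I act s (Finsupp.single p n) =
      n • ∑ e ∈ p.2.val.attach, ((-1 : ℤ) ^ (posIdx p.2 e + 1)) •
        (Finsupp.single (act p.1 e.val, faceClique p.2 e) (1 : ℤ)
          - Finsupp.single (p.1, faceClique p.2 e) (1 : ℤ)) := by
  rw [Ad, Finsupp.liftAddHom_apply_single, zmultiplesHom_apply]

lemma a_mem_pair (a b : E) (hab : a < b) (h1 : I a b) (h2 : I b a) :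
    a ∈ (pairClique I a b hab h1 h2).val := by simp [pairClique]

lemma b_mem_pair (a b : E) (hab : a < b) (h1 : I a b) (h2 : I b a) :
    b ∈ (pairClique I a b hab h1 h2).val := by simp [pairClique]

lemma posIdx_pair_left (a b : E) (hab : a < b) (h1 : I a b) (h2 : I b a) :
    posIdx (pairClique I a b hab h1 h2) ⟨a, a_mem_pair I a b hab h1 h2⟩ = 0 := by
  rw [posIdx, Finset.card_eq_zero, Finset.filter_eq_empty_iff]
  intro x hx
  simp only [pairClique, Finset.mem_insert, Finset.mem_singleton] at hx
  rcases hx with rfl | rfl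
  · exact lt_irrefl _
  · exact not_lt.mpr hab.le

lemma posIdx_pair_right (a b : E) (hab : a < b) (h1 : I a b) (h2 : I b a) :
    posIdx (pairClique I a b hab h1 h2) ⟨b, b_mem_pair I a b hab h1 h2⟩ = 1 := by
  rw [posIdx]
  have : (pairClique I a b hab h1 h2).val.filter (fun x => x < b) = {a} := by
    ext x
    simp only [pairClique, Finset.mem_insert, Finset.mem_singleton, Finset.mem_filter]
    constructor
    · rintro ⟨rfl | rfl, h⟩
      · rfl
      · exact absurd h (lt_irrefl _)
    · rintro rfl; exact ⟨Or.inl rfl, hab⟩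
  rw [this, Finset.card_singleton]

lemma face_pair_left (a b : E) (hab : a < b) (h1 : I a b) (h2 : I b a) :
    faceClique (pairClique I a b hab h1 h2) ⟨a, a_mem_pair I a b hab h1 h2⟩ = sgl I b := by
  apply Subtype.ext
  show ({a, b} : Finset E).erase a = {b}
  exact Finset.erase_insert (by simp [hab.ne])

lemma face_pair_right (a b : E) (hab : a < b) (h1 : I a b) (h2 : I b a) :
    faceClique (pairClique I a b hab h1 h2) ⟨b, b_mem_pair I a b hab h1 h2⟩ = sgl I a := by
  apply Subtype.ext
  show ({a, b} : Finset E).erase b = {a}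
  rw [Finset.pair_comm]
  exact Finset.erase_insert (by simp [hab.ne'])

lemma Ad_single_pair (act : Option X → E → Option X) (o : Option X)
    (a b : E) (hab : a < b) (h1 : I a b) (h2 : I b a) (n : ℤ) :
    Ad I act 1 (Finsupp.single (o, pairClique I a b hab h1 h2) n) =
      n • (Finsupp.single (o, sgl I b) (1 : ℤ) - Finsupp.single (o, sgl I a) 1
        - Finsupp.single (act o a, sgl I b) 1 + Finsupp.single (act o b, sgl I a) 1) := by
  rw [Ad_single]
  congr 1
  dsimp only
  rw [attach_sum_pair hab.ne (show (pairClique I a b hab h1 h2).val = {a, b} from rfl) _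
    (a_mem_pair I a b hab h1 h2) (b_mem_pair I a b hab h1 h2)]
  rw [posIdx_pair_left, posIdx_pair_right, face_pair_left, face_pair_right]
  norm_num
  abel

lemma clique2_cases (S : Clique I 2) :
    ∃ (a b : E) (hab : a < b) (h1 : I a b) (h2 : I b a),
      S = pairClique I a b hab h1 h2 := by
  obtain ⟨a, b, hne, hval⟩ := Finset.card_eq_two.mp S.2.1
  have hma : a ∈ S.val := by rw [hval]; simp
  have hmb : b ∈ S.val := by rw [hval]; simp
  have h1 : I a b := S.2.2 a hma b hmb hne
  have h2 : I b a := S.2.2 b hmb a hma hne.symm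
  rcases hne.lt_or_gt with h | h
  · exact ⟨a, b, h, h1, h2, Subtype.ext hval⟩
  · exact ⟨b, a, h, h2, h1, Subtype.ext (hval.trans (Finset.pair_comm a b))⟩

/-- First test map: total `E`-degree. -/
noncomputable def psi1 : AC I X 1 →+ (E →₀ ℤ) :=
  Finsupp.mapDomain.addMonoidHom (fun p : Option X × Clique I 1 => elt I p.2)

/-- Second test map: component class. -/
noncomputable def psi2 : AC I X 1 →+ ((Option X × Quot I) →₀ ℤ) :=
  Finsupp.mapDomain.addMonoidHom
    (fun p : Option X × Clique I 1 => (p.1, Quot.mk I (elt I p.2)))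

lemma psi1_single (p : Option X × Clique I 1) (n : ℤ) :
    psi1 I (Finsupp.single p n) = Finsupp.single (elt I p.2) n := by
  simp [psi1, Finsupp.mapDomain.addMonoidHom, Finsupp.mapDomain_single]

lemma psi2_single (p : Option X × Clique I 1) (n : ℤ) :
    psi2 I (Finsupp.single p n) = Finsupp.single (p.1, Quot.mk I (elt I p.2)) n := by
  simp [psi2, Finsupp.mapDomain.addMonoidHom, Finsupp.mapDomain_single]

lemma psi1_Ad (act : Option X → E → Option X) (u : AC I X 2) :
    psi1 I (Ad I act 1 u) = 0 := by
  induction u using Finsupp.induction_linear with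
  | zero => simp
  | add f g hf hg => rw [map_add, map_add, hf, hg, add_zero]
  | single p n =>
      obtain ⟨o, S⟩ := p
      obtain ⟨a, b, hab, h1, h2, rfl⟩ := clique2_cases I S
      rw [Ad_single_pair, map_zsmul]
      rw [map_add, map_sub, map_sub, psi1_single, psi1_single, psi1_single, psi1_single]
      simp only [elt_sgl]
      have : (Finsupp.single b (1 : ℤ) - Finsupp.single a 1 - Finsupp.single b 1
          + Finsupp.single a 1 : E →₀ ℤ) = 0 := by abel
      rw [this, smul_zero]

lemma psi2_Ad (act : Option X → E → Option X)
    (hfull : ∀ o e e', act o e = act o e') (u : AC I X 2) :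
    psi2 I (Ad I act 1 u) = 0 := by
  induction u using Finsupp.induction_linear with
  | zero => simp
  | add f g hf hg => rw [map_add, map_add, hf, hg, add_zero]
  | single p n =>
      obtain ⟨o, S⟩ := p
      obtain ⟨a, b, hab, h1, h2, rfl⟩ := clique2_cases I S
      rw [Ad_single_pair, map_zsmul]
      rw [map_add, map_sub, map_sub, psi2_single, psi2_single, psi2_single, psi2_single]
      simp only [elt_sgl]
      rw [hfull o a b, Quot.sound h1]
      have : (Finsupp.single (o, Quot.mk I b) (1 : ℤ)
          - Finsupp.single (o, Quot.mk I b) 1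
          - Finsupp.single (act o b, Quot.mk I b) 1
          + Finsupp.single (act o b, Quot.mk I b) 1 : (Option X × Quot I) →₀ ℤ) = 0 := by abel
      rw [this, smul_zero]

/-- The basic relative cycle. -/
noncomputable def box (o : Option X) (a b : E) : AC I X 1 :=
  Finsupp.single (o, sgl I b) 1 - Finsupp.single (o, sgl I a) 1
    - Finsupp.single ((none : Option X), sgl I b) 1
    + Finsupp.single ((none : Option X), sgl I a) 1

lemma step_mem (act : Option X → E → Option X)
    (hfull : ∀ o e e', act o e = act o e') (e0 : E) (o : Option X)
    (a b : E) (hab : a < b) (h1 : I a b) (h2 : I b a) :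
    Finsupp.single (o, sgl I b) (1 : ℤ) - Finsupp.single (o, sgl I a) 1
      - Finsupp.single (act o e0, sgl I b) 1 + Finsupp.single (act o e0, sgl I a) 1
      ∈ (Ad I act 1).range := by
  refine ⟨Finsupp.single (o, pairClique I a b hab h1 h2) 1, ?_⟩
  rw [Ad_single_pair, one_smul, hfull o a e0, hfull o b e0]

lemma box_edge_mem (act : Option X → E → Option X)
    (hfull : ∀ o e e', act o e = act o e') (e0 : E)
    (htree : ∀ x : X, ∃ k : ℕ, (fun o => act o e0)^[k] (some x) = none)
    (a b : E) (hab : a < b) (h1 : I a b) (h2 : I b a) (o : Option X) :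
    box I o a b ∈ (Ad I act 1).range := by
  have key : ∀ (k : ℕ) (o : Option X), (fun o => act o e0)^[k] o = none →
      box I o a b ∈ (Ad I act 1).range := by
    intro k
    induction k with
    | zero =>
        intro o h
        simp only [Function.iterate_zero, id] at h
        subst h
        have hz : box I (none : Option X) a b = 0 := by rw [box]; abel
        rw [hz]; exact zero_mem _
    | succ k ih =>
        intro o h
        rw [Function.iterate_succ_apply] at h
        have hb := ih (act o e0) h
        have hs := step_mem I act hfull e0 o a b hab h1 h2
        have hsplit : box I o a b =
            (Finsupp.single (o, sgl I b) (1 : ℤ) - Finsupp.single (o, sgl I a) 1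
              - Finsupp.single (act o e0, sgl I b) 1
              + Finsupp.single (act o e0, sgl I a) 1)
            + box I (act o e0) a b := by
          rw [box, box]; abel
        rw [hsplit]
        exact add_mem hs hb
  cases o with
  | none => exact key 0 none rfl
  | some x =>
      obtain ⟨k, hk⟩ := htree x
      exact key k _ hk

lemma box_mem (hsym : ∀ e e', I e e' → I e' e)
    (act : Option X → E → Option X)
    (hfull : ∀ o e e', act o e = act o e') (e0 : E)
    (htree : ∀ x : X, ∃ k : ℕ, (fun o => act o e0)^[k] (some x) = none)
    (a b : E) (h : Relation.EqvGen I a b) (o : Option X) :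
    box I o a b ∈ (Ad I act 1).range := by
  induction h with
  | rel x y hxy =>
      rcases lt_trichotomy x y with h | h | h
      · exact box_edge_mem I act hfull e0 htree x y h hxy (hsym _ _ hxy) o
      · subst h
        have hz : box I o x x = 0 := by rw [box]; abel
        rw [hz]; exact zero_mem _
      · have hneg : box I o x y = - box I o y x := by rw [box, box]; abel
        rw [hneg]
        exact neg_mem (box_edge_mem I act hfull e0 htree y x h (hsym _ _ hxy) hxy o)
  | refl x =>
      have hz : box I o x x = 0 := by rw [box]; abel
      rw [hz]; exact zero_mem _
  | symm x y _ ih =>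
      have hneg : box I o y x = - box I o x y := by rw [box, box]; abel
      rw [hneg]; exact neg_mem ih
  | trans x y z _ _ ih1 ih2 =>
      have hsum : box I o x z = box I o x y + box I o y z := by
        rw [box, box, box]; abel
      rw [hsum]; exact add_mem ih1 ih2

lemma mem_range_of_psi (hsym : ∀ e e', I e e' → I e' e)
    (act : Option X → E → Option X)
    (hfull : ∀ o e e', act o e = act o e') (e0 : E)
    (htree : ∀ x : X, ∃ k : ℕ, (fun o => act o e0)^[k] (some x) = none)
    (z : AC I X 1) (hz1 : psi1 I z = 0) (hz2 : psi2 I z = 0) :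
    z ∈ (Ad I act 1).range := by
  classical
  set g1 : Option X × Clique I 1 → Option X × Clique I 1 :=
    fun p => (p.1, sgl I (Quot.out (Quot.mk I (elt I p.2)))) with hg1
  set g2 : Option X × Clique I 1 → Option X × Clique I 1 :=
    fun p => ((none : Option X), p.2) with hg2
  set g3 : Option X × Clique I 1 → Option X × Clique I 1 :=
    fun p => ((none : Option X), sgl I (Quot.out (Quot.mk I (elt I p.2)))) with hg3
  have hm1 : Finsupp.mapDomain g1 z = 0 := by
    have hcomp : g1 = (fun q : Option X × Quot I => (q.1, sgl I (Quot.out q.2))) ∘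
        (fun p : Option X × Clique I 1 => (p.1, Quot.mk I (elt I p.2))) := rfl
    rw [hcomp, Finsupp.mapDomain_comp]
    have : Finsupp.mapDomain
        (fun p : Option X × Clique I 1 => (p.1, Quot.mk I (elt I p.2))) z = psi2 I z := rfl
    rw [this, hz2, Finsupp.mapDomain_zero]
  have hm2 : Finsupp.mapDomain g2 z = 0 := by
    have hcomp : g2 = (fun e : E => ((none : Option X), sgl I e)) ∘
        (fun p : Option X × Clique I 1 => elt I p.2) := by
      funext p
      simp only [hg2, Function.comp_apply, sgl_elt]
    rw [hcomp, Finsupp.mapDomain_comp]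
    have : Finsupp.mapDomain (fun p : Option X × Clique I 1 => elt I p.2) z = psi1 I z := rfl
    rw [this, hz1, Finsupp.mapDomain_zero]
  have hm3 : Finsupp.mapDomain g3 z = 0 := by
    have hcomp : g3 = (fun e : E => ((none : Option X), sgl I (Quot.out (Quot.mk I e)))) ∘
        (fun p : Option X × Clique I 1 => elt I p.2) := rfl
    rw [hcomp, Finsupp.mapDomain_comp]
    have : Finsupp.mapDomain (fun p : Option X × Clique I 1 => elt I p.2) z = psi1 I z := rfl
    rw [this, hz1, Finsupp.mapDomain_zero]
  have hzz : z = z - Finsupp.mapDomain g1 z - Finsupp.mapDomain g2 z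
      + Finsupp.mapDomain g3 z := by
    rw [hm1, hm2, hm3]; abel
  rw [hzz]
  have main : ∀ w : AC I X 1,
      w - Finsupp.mapDomain g1 w - Finsupp.mapDomain g2 w + Finsupp.mapDomain g3 w
        ∈ (Ad I act 1).range := by
    intro w
    induction w using Finsupp.induction_linear with
    | zero => simp only [Finsupp.mapDomain_zero, sub_zero, add_zero]; exact zero_mem _
    | add f g hf hg =>
        rw [Finsupp.mapDomain_add, Finsupp.mapDomain_add, Finsupp.mapDomain_add]
        have : f + g - (Finsupp.mapDomain g1 f + Finsupp.mapDomain g1 g)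
            - (Finsupp.mapDomain g2 f + Finsupp.mapDomain g2 g)
            + (Finsupp.mapDomain g3 f + Finsupp.mapDomain g3 g)
          = (f - Finsupp.mapDomain g1 f - Finsupp.mapDomain g2 f + Finsupp.mapDomain g3 f)
            + (g - Finsupp.mapDomain g1 g - Finsupp.mapDomain g2 g
              + Finsupp.mapDomain g3 g) := by abel
        rw [this]
        exact add_mem hf hg
    | single p n =>
        obtain ⟨o, S⟩ := p
        rw [Finsupp.mapDomain_single, Finsupp.mapDomain_single, Finsupp.mapDomain_single]
        have hbox : Finsupp.single (o, S) n - Finsupp.single (g1 (o, S)) n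
            - Finsupp.single (g2 (o, S)) n + Finsupp.single (g3 (o, S)) n
            = n • box I o (Quot.out (Quot.mk I (elt I S))) (elt I S) := by
          have hS : S = sgl I (elt I S) := (sgl_elt I S).symm
          rw [box, smul_add, smul_sub, smul_sub, Finsupp.smul_single, Finsupp.smul_single,
            Finsupp.smul_single, Finsupp.smul_single, smul_eq_mul, mul_one]
          simp only [hg1, hg2, hg3]
          rw [← hS]
        rw [hbox]
        have heqv : Relation.EqvGen I (Quot.out (Quot.mk I (elt I S))) (elt I S) :=
          Quot.eqvGen_exact (Quot.out_eq (Quot.mk I (elt I S)))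
        exact zsmul_mem (box_mem I hsym act hfull e0 htree _ _ heqv o) n
  exact main z

end Aux

end PCMHomology

namespace PCMHomology

/-- Let `X^•` be a finite pointed `M(E,I)`-set with full
action satisfying the rooted-tree condition. Then the integer one-dimensional
homology group `H₁(A(X^•))` is torsion-free. -/
theorem stmt9 {E : Type*} [LinearOrder E] [Fintype E] [Nonempty E]
    (I : E → E → Prop) (hirr : ∀ e, ¬ I e e) (hsym : ∀ e e', I e e' → I e' e)
    (X : Type*) [Finite X]
    (act : Option X → E → Option X)
    (hstar : ∀ e, act none e = none)
    (hcomm : ∀ o e e', I e e' → act (act o e) e' = act (act o e') e)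
    (hfull : ∀ o e e', act o e = act o e')
    (e0 : E)
    (htree : ∀ x : X, ∃ k : ℕ, (fun o => act o e0)^[k] (some x) = none) :
    ∀ (x : Hmlgy (AC I X) (Ad I act) 1) (m : ℤ), m • x = 0 → m = 0 ∨ x = 0 := by
  classical
  intro x m hmx
  by_cases hm : m = 0
  · exact Or.inl hm
  refine Or.inr ?_
  obtain ⟨z, rfl⟩ := QuotientAddGroup.mk'_surjective
    (((Ad I act 1).range).addSubgroupOf (Ad I act 0).ker) x
  have hmx' : (QuotientAddGroup.mk' (((Ad I act 1).range).addSubgroupOf (Ad I act 0).ker))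
      (m • z) = 0 := by
    rw [map_zsmul]; exact hmx
  rw [QuotientAddGroup.mk'_apply, QuotientAddGroup.eq_zero_iff,
    AddSubgroup.mem_addSubgroupOf] at hmx'
  have hcoe : ((m • z : (Ad I act 0).ker) : AC I X 1) = m • (z : AC I X 1) := rfl
  rw [hcoe] at hmx'
  obtain ⟨u, hu⟩ := hmx'
  have hp1 : psi1 I (z : AC I X 1) = 0 := by
    have h0 : m • psi1 I (z : AC I X 1) = 0 := by
      rw [← map_zsmul, ← hu, psi1_Ad]
    ext a
    have h1 := DFunLike.congr_fun h0 a
    simp only [Finsupp.smul_apply, Finsupp.coe_zero, Pi.zero_apply, smul_eq_mul] at h1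
    rcases mul_eq_zero.mp h1 with h | h
    · exact absurd h hm
    · simpa using h
  have hp2 : psi2 I (z : AC I X 1) = 0 := by
    have h0 : m • psi2 I (z : AC I X 1) = 0 := by
      rw [← map_zsmul, ← hu, psi2_Ad I act hfull]
    ext a
    have h1 := DFunLike.congr_fun h0 a
    simp only [Finsupp.smul_apply, Finsupp.coe_zero, Pi.zero_apply, smul_eq_mul] at h1
    rcases mul_eq_zero.mp h1 with h | h
    · exact absurd h hm
    · simpa using h
  have hmem := mem_range_of_psi I hsym act hfull e0 htree _ hp1 hp2
  show (QuotientAddGroup.mk' (((Ad I act 1).range).addSubgroupOf (Ad I act 0).ker)) z = 0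
  rw [QuotientAddGroup.mk'_apply, QuotientAddGroup.eq_zero_iff,
    AddSubgroup.mem_addSubgroupOf]
  exact hmem


end PCMHomology
end
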